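/- Let X be a Banach space such that the dual space X* contains no closed subspace isomorphic (as a Banach space, via a continuous linear bijection with continuous inverse) to ℓ¹, the space of absolutely summable real sequences. Then X has weak*-sequentially compact dual ball. -/

import Mathlib

open Filter Topology MeasureTheory
open scoped ENNReal

noncomputable section

/-- A Banach space `X` has weak*-sequentially compact dual ball if every sequence in the
closed unit ball of `X*` has a weak*-convergent subsequence. -/
def WStarSeqCompactDualBall (X : Type*) [SeminormedAddCommGroup X] [NormedSpace ℝ X] : Prop :=
  ∀ f : ℕ → (X →L[ℝ] ℝ), (∀ n, ‖f n‖ ≤ 1) →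
    ∃ φ : ℕ → ℕ, StrictMono φ ∧ ∃ g : X →L[ℝ] ℝ,
      ∀ x : X, Tendsto (fun k => f (φ k) x) atTop (nhds (g x))

/-- A Banach space `X` is a Grothendieck space if every weak*-convergent sequence in `X*`
is weakly convergent. -/
def GrothendieckSpace (X : Type*) [SeminormedAddCommGroup X] [NormedSpace ℝ X] : Prop :=
  ∀ (f : ℕ → (X →L[ℝ] ℝ)) (g : X →L[ℝ] ℝ),
    (∀ x : X, Tendsto (fun n => f n x) atTop (nhds (g x))) →
    ∀ F : (X →L[ℝ] ℝ) →L[ℝ] ℝ, Tendsto (fun n => F (f n)) atTop (nhds (F g))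

/-- An operator is weakly compact if the closure of the image of the closed unit ball is
compact in the weak topology of the codomain. -/
def IsWeaklyCompactOp {X Y : Type*} [SeminormedAddCommGroup X] [NormedSpace ℝ X]
    [SeminormedAddCommGroup Y] [NormedSpace ℝ Y] (T : X →L[ℝ] Y) : Prop :=
  IsCompact (closure (toWeakSpace ℝ Y '' (T '' Metric.closedBall (0:X) 1)))

/-- `ℓ¹`, the space of absolutely summable real sequences. -/
abbrev ellOne : Type := ↥(lp (fun _ : ℕ => ℝ) 1)

/-- Two normed spaces are isomorphic if there is a continuous linear bijection between them
with continuous inverse. -/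
def IsomorphicBanach (X Y : Type*) [SeminormedAddCommGroup X] [NormedSpace ℝ X]
    [SeminormedAddCommGroup Y] [NormedSpace ℝ Y] : Prop :=
  Nonempty (X ≃L[ℝ] Y)

namespace NWx

def InitSeg (s : Finset ℕ) (M : Set ℕ) : Prop :=
  ↑s ⊆ M ∧ ∀ n ∈ M, n ∉ s → ∀ m ∈ s, m < n

def Hits (Fam : Set (Finset ℕ)) (M : Set ℕ) : Prop := ∃ s ∈ Fam, InitSeg s M

def Accepts (Fam : Set (Finset ℕ)) (s : Finset ℕ) (M : Set ℕ) : Prop :=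
  ∀ N, N ⊆ M → N.Infinite → Hits Fam (↑s ∪ N)

def Rejects (Fam : Set (Finset ℕ)) (s : Finset ℕ) (M : Set ℕ) : Prop :=
  ∀ N, N ⊆ M → N.Infinite → ¬ Accepts Fam s N

variable {Fam : Set (Finset ℕ)}

theorem Accepts.mono {s : Finset ℕ} {M N : Set ℕ} (h : Accepts Fam s M) (hNM : N ⊆ M) :
    Accepts Fam s N := fun R hR hRi => h R (hR.trans hNM) hRi

theorem Rejects.mono {s : Finset ℕ} {M N : Set ℕ} (h : Rejects Fam s M) (hNM : N ⊆ M) :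
    Rejects Fam s N := fun R hR hRi => h R (hR.trans hNM) hRi

theorem decide_aux (Fam : Set (Finset ℕ)) (t : Finset ℕ) (M : Set ℕ) (hM : M.Infinite) :
    ∃ N, N ⊆ M ∧ N.Infinite ∧ (Accepts Fam t N ∨ Rejects Fam t N) := by
  by_cases hc : ∃ N, N ⊆ M ∧ N.Infinite ∧ Accepts Fam t N
  · obtain ⟨N, h1, h2, h3⟩ := hc; exact ⟨N, h1, h2, Or.inl h3⟩
  · exact ⟨M, subset_rfl, hM, Or.inr (fun N hN hNinf hacc => hc ⟨N, hN, hNinf, hacc⟩)⟩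

theorem lemmaA (Fam : Set (Finset ℕ)) (s : Finset ℕ) (M : Set ℕ) (hM : M.Infinite)
    (hrej : Rejects Fam s M) :
    ∃ N, N ⊆ M ∧ N.Infinite ∧ ∀ n ∈ N, Rejects Fam (insert n s) N := by
  classical
  have step : ∀ p : {q : Set ℕ // q.Infinite}, ∃ r : {q : Set ℕ // q.Infinite},
      r.1 ⊆ p.1 ∩ Set.Ioi (sInf p.1) ∧
      (Accepts Fam (insert (sInf p.1) s) r.1 ∨ Rejects Fam (insert (sInf p.1) s) r.1) := by
    intro p
    have hsub : p.1 \ {sInf p.1} ⊆ p.1 ∩ Set.Ioi (sInf p.1) := by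
      rintro x ⟨hx1, hx2⟩
      have h1 : sInf p.1 ≤ x := Nat.sInf_le hx1
      have h2 : x ≠ sInf p.1 := by simpa using hx2
      exact ⟨hx1, lt_of_le_of_ne h1 (Ne.symm h2)⟩
    have hinf : (p.1 ∩ Set.Ioi (sInf p.1)).Infinite :=
      (p.2.diff (Set.finite_singleton _)).mono hsub
    obtain ⟨N, h1, h2, h3⟩ := decide_aux Fam (insert (sInf p.1) s) _ hinf
    exact ⟨⟨N, h2⟩, h1, h3⟩
  choose stepf hstep1 hstep2 using step
  set C : ℕ → {q : Set ℕ // q.Infinite} := fun k => Nat.rec ⟨M, hM⟩ (fun _ p => stepf p) k with hC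
  set n : ℕ → ℕ := fun k => sInf (C k).1 with hn
  have hCsucc : ∀ k, (C (k + 1)).1 ⊆ (C k).1 ∩ Set.Ioi (n k) := fun k => hstep1 (C k)
  have hCmono : ∀ k l, k ≤ l → (C l).1 ⊆ (C k).1 := by
    intro k l hkl
    induction l, hkl using Nat.le_induction with
    | base => exact subset_rfl
    | succ l hkl ih => exact (((hCsucc l).trans Set.inter_subset_left)).trans ih
  have hnmem : ∀ k, n k ∈ (C k).1 := fun k => Nat.sInf_mem (C k).2.nonempty
  have hnsm : StrictMono n := by
    apply strictMono_nat_of_lt_succ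
    intro k
    exact ((hCsucc k) (hnmem (k + 1))).2
  have hnM : ∀ k, n k ∈ M := fun k => hCmono 0 k (Nat.zero_le k) (hnmem k)
  have hdec : ∀ k, Accepts Fam (insert (n k) s) (C (k + 1)).1 ∨
      Rejects Fam (insert (n k) s) (C (k + 1)).1 := fun k => hstep2 (C k)
  set Acc : Set ℕ := {k | Accepts Fam (insert (n k) s) (C (k + 1)).1} with hAccDef
  by_cases hAcc : Acc.Infinite
  · exfalso
    set N := n '' Acc with hNdef
    have hNM : N ⊆ M := by rintro x ⟨k, _, rfl⟩; exact hnM k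
    have hNi : N.Infinite := hAcc.image (hnsm.injective.injOn)
    apply hrej N hNM hNi
    intro R hRN hRi
    have hR0 : sInf R ∈ R := Nat.sInf_mem hRi.nonempty
    obtain ⟨j, hjAcc, hjeq⟩ := hRN hR0
    have hR' : R \ {sInf R} ⊆ (C (j + 1)).1 := by
      rintro r ⟨hrR, hrne⟩
      obtain ⟨i, _, rfl⟩ := hRN hrR
      have h1 : sInf R < n i := lt_of_le_of_ne (Nat.sInf_le hrR) (by simpa using (Ne.symm (by simpa using hrne)))
      have h2 : j < i := hnsm.lt_iff_lt.mp (by rw [hjeq]; exact h1)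
      exact hCmono (j + 1) i h2 (hnmem i)
    have hR'i : (R \ {sInf R}).Infinite := hRi.diff (Set.finite_singleton _)
    obtain ⟨t, htF, ht⟩ := hjAcc (R \ {sInf R}) hR' hR'i
    refine ⟨t, htF, ?_⟩
    have hset : (↑(insert (n j) s) : Set ℕ) ∪ (R \ {sInf R}) = ↑s ∪ R := by
      rw [Finset.coe_insert, hjeq]
      ext x
      simp only [Set.mem_union, Set.mem_insert_iff, Set.mem_diff, Set.mem_singleton_iff,
        Finset.coe_insert, Set.mem_setOf_eq, Finset.mem_coe]
      constructor
      · rintro ((rfl | hx) | ⟨hx, _⟩)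
        exacts [Or.inr hR0, Or.inl hx, Or.inr hx]
      · rintro (hx | hx)
        · exact Or.inl (Or.inr hx)
        · by_cases hxe : x = sInf R
          · exact Or.inl (Or.inl hxe)
          · exact Or.inr ⟨hx, hxe⟩
    rwa [hset] at ht
  · have hfin : Acc.Finite := Set.not_infinite.mp hAcc
    obtain ⟨K, hK⟩ : ∃ K, ∀ k, K ≤ k → k ∉ Acc := by
      rcases Set.eq_empty_or_nonempty Acc with he | hne
      · exact ⟨0, fun k _ hk => by rw [he] at hk; exact hk⟩
      · obtain ⟨K, hK⟩ := hfin.bddAbove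
        exact ⟨K + 1, fun k hk hkA => by have := hK hkA; omega⟩
    refine ⟨n '' Set.Ici K, ?_, (Set.Ici_infinite K).image (hnsm.injective.injOn), ?_⟩
    · rintro x ⟨k, _, rfl⟩; exact hnM k
    · rintro m ⟨k, hk, rfl⟩
      intro R hRN hRi hacc
      have hrejk : Rejects Fam (insert (n k) s) (C (k + 1)).1 := (hdec k).resolve_left (hK k hk)
      have hR' : R \ (n '' Set.Icc K k) ⊆ (C (k + 1)).1 := by
        rintro r ⟨hrR, hrni⟩
        obtain ⟨i, hiK, rfl⟩ := hRN hrR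
        have hik : ¬ i ≤ k := fun hle => hrni ⟨i, ⟨hiK, hle⟩, rfl⟩
        exact hCmono (k + 1) i (by omega) (hnmem i)
      have hinf' : (R \ (n '' Set.Icc K k)).Infinite := hRi.diff ((Set.finite_Icc K k).image n)
      exact hrejk _ hR' hinf' (hacc.mono Set.diff_subset)

theorem lemmaB (Fam : Set (Finset ℕ)) (SS : Finset (Finset ℕ)) (M : Set ℕ) (hM : M.Infinite)
    (hrej : ∀ t ∈ SS, Rejects Fam t M) :
    ∃ N, N ⊆ M ∧ N.Infinite ∧ (∀ t ∈ SS, Rejects Fam t N) ∧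
      ∀ t ∈ SS, ∀ n ∈ N, Rejects Fam (insert n t) N := by
  classical
  induction SS using Finset.induction_on generalizing M with
  | empty => exact ⟨M, subset_rfl, hM, by simp, by simp⟩
  | @insert t SS ht ih =>
    obtain ⟨N₁, hN₁M, hN₁i, hN₁rej, hN₁ins⟩ := ih M hM (fun u hu => hrej u (Finset.mem_insert_of_mem hu))
    obtain ⟨N, hNN₁, hNi, hNins⟩ := lemmaA Fam t N₁ hN₁i ((hrej t (Finset.mem_insert_self t SS)).mono hN₁M)
    refine ⟨N, hNN₁.trans hN₁M, hNi, ?_, ?_⟩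
    · intro u hu
      rcases Finset.mem_insert.1 hu with rfl | hu
      · exact ((hrej u (Finset.mem_insert_self u SS)).mono (hNN₁.trans hN₁M))
      · exact (hN₁rej u hu).mono hNN₁
    · intro u hu n hn
      rcases Finset.mem_insert.1 hu with rfl | hu
      · exact hNins n hn
      · exact (hN₁ins u hu n (hNN₁ hn)).mono hNN₁

theorem fusion (Fam : Set (Finset ℕ)) (M : Set ℕ) (hM : M.Infinite)
    (hrej : Rejects Fam (∅ : Finset ℕ) M) :
    ∃ H, H ⊆ M ∧ H.Infinite ∧ ∀ s : Finset ℕ, ↑s ⊆ H → s ∉ Fam := by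
  classical
  let Inv : Finset ℕ × Set ℕ → Prop := fun q => q.2.Infinite ∧ q.2 ⊆ M ∧ ↑q.1 ⊆ M ∧
      (∀ t ∈ q.1.powerset, Rejects Fam t q.2) ∧ (∀ m ∈ q.1, ∀ x ∈ q.2, m < x)
  have step : ∀ p : {q : Finset ℕ × Set ℕ // Inv q}, ∃ r : {q : Finset ℕ × Set ℕ // Inv q},
      p.1.1 ⊆ r.1.1 ∧ r.1.1.card = p.1.1.card + 1 ∧ r.1.2 ⊆ p.1.2 ∧
      ↑r.1.1 ⊆ ↑p.1.1 ∪ p.1.2 := by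
    rintro ⟨⟨E, M'⟩, hinf, hM'M, hEM, hrejP, hlt⟩
    obtain ⟨N, hNM', hNi, hNrej, hNins⟩ := lemmaB Fam E.powerset M' hinf hrejP
    set m := sInf N with hm
    have hmN : m ∈ N := Nat.sInf_mem hNi.nonempty
    have hmE : m ∉ E := fun hmE => lt_irrefl m (hlt m hmE m (hNM' hmN))
    have hsub : N \ {m} ⊆ N ∩ Set.Ioi m := by
      rintro x ⟨hx1, hx2⟩
      exact ⟨hx1, lt_of_le_of_ne (Nat.sInf_le hx1) (Ne.symm (by simpa using hx2))⟩
    have hN'i : (N ∩ Set.Ioi m).Infinite := (hNi.diff (Set.finite_singleton _)).mono hsub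
    refine ⟨⟨(insert m E, N ∩ Set.Ioi m), hN'i, (Set.inter_subset_left.trans hNM').trans hM'M,
      ?_, ?_, ?_⟩, Finset.subset_insert m E, Finset.card_insert_of_notMem hmE,
      Set.inter_subset_left.trans hNM', ?_⟩
    · rw [Finset.coe_insert]
      exact Set.insert_subset (hM'M (hNM' hmN)) hEM
    · intro t ht
      rw [Finset.mem_powerset] at ht
      by_cases hmt : m ∈ t
      · have h1 : t.erase m ⊆ E := by
          intro x hx
          rcases Finset.mem_insert.1 (ht (Finset.mem_of_mem_erase hx)) with rfl | h
          · exact absurd rfl (Finset.ne_of_mem_erase hx)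
          · exact h
        have := hNins (t.erase m) (Finset.mem_powerset.2 h1) m hmN
        rw [Finset.insert_erase hmt] at this
        exact this.mono Set.inter_subset_left
      · have h1 : t ⊆ E := fun x hx => by
          rcases Finset.mem_insert.1 (ht hx) with rfl | h
          · exact absurd hx hmt
          · exact h
        exact (hNrej t (Finset.mem_powerset.2 h1)).mono Set.inter_subset_left
    · intro m' hm' x hx
      rcases Finset.mem_insert.1 hm' with rfl | h
      · exact hx.2
      · exact hlt m' h x (hNM' hx.1)
    · rw [Finset.coe_insert]
      exact Set.insert_subset (Or.inr (hNM' hmN)) (fun x hx => Or.inl hx)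
  choose stepf hstep1 hstep2 hstep3 hstep4 using step
  have base : Inv (∅, M) := by
    refine ⟨hM, subset_rfl, by simp, ?_, by simp⟩
    intro t ht
    rw [Finset.mem_powerset, Finset.subset_empty] at ht
    subst ht; exact hrej
  set C : ℕ → {q : Finset ℕ × Set ℕ // Inv q} :=
    fun k => Nat.rec ⟨(∅, M), base⟩ (fun _ p => stepf p) k with hCdef
  have hcard : ∀ k, (C k).1.1.card = k := by
    intro k; induction k with
    | zero => simp [hCdef]
    | succ k ih => rw [show C (k+1) = stepf (C k) from rfl, hstep2, ih]
  have hEmono : ∀ k l, k ≤ l → (C k).1.1 ⊆ (C l).1.1 := by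
    intro k l hkl
    induction l, hkl using Nat.le_induction with
    | base => exact subset_rfl
    | succ l hkl ih => exact ih.trans (hstep1 (C l))
  set H : Set ℕ := ⋃ k, ↑((C k).1.1) with hHdef
  have hHM : H ⊆ M := by
    rintro x hx
    obtain ⟨k, hk⟩ := Set.mem_iUnion.1 hx
    exact (C k).2.2.2.1 hk
  have hHi : H.Infinite := by
    intro hfin
    have : ∀ k, (C k).1.1.card ≤ hfin.toFinset.card := by
      intro k
      apply Finset.card_le_card
      intro x hx
      rw [Set.Finite.mem_toFinset]
      exact Set.mem_iUnion.2 ⟨k, hx⟩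
    have h2 := this (hfin.toFinset.card + 1)
    rw [hcard (hfin.toFinset.card + 1)] at h2; omega
  refine ⟨H, hHM, hHi, ?_⟩
  intro s hs hsF
  have hxs : ∀ x ∈ s, ∃ k, x ∈ (C k).1.1 := by
    intro x hx
    obtain ⟨k, hk⟩ := Set.mem_iUnion.1 (hs hx)
    exact ⟨k, hk⟩
  choose st hst using hxs
  set k := s.attach.sup (fun x => st x.1 x.2) with hkdef
  have hsk : s ⊆ (C k).1.1 := by
    intro x hx
    exact hEmono (st x hx) k (Finset.le_sup (f := fun y : {a // a ∈ s} => st y.1 y.2)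
      (Finset.mem_attach s ⟨x, hx⟩)) (hst x hx)
  have hrejs : Rejects Fam s (C k).1.2 := (C k).2.2.2.2.1 s (Finset.mem_powerset.2 hsk)
  set N := (C k).1.2 ∩ {x | ∀ m ∈ s, m < x} with hNdef
  have hNi : N.Infinite := by
    have hsub : (C k).1.2 \ Set.Iic (s.sup id) ⊆ N := by
      rintro x ⟨hx1, hx2⟩
      refine ⟨hx1, fun m hm => ?_⟩
      simp only [Set.mem_Iic, not_le] at hx2
      exact lt_of_le_of_lt (Finset.le_sup (f := id) hm) hx2
    exact ((C k).2.1.diff (Set.finite_Iic _)).mono hsub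
  apply hrejs N Set.inter_subset_left hNi
  intro R hRN hRi
  refine ⟨s, hsF, Set.subset_union_left, ?_⟩
  rintro x (hx | hx) hxs'
  · exact absurd (Finset.mem_coe.1 hx) hxs'
  · exact fun m hm => (hRN hx).2 m hm
theorem nashWilliams (Fam : Set (Finset ℕ)) (M : Set ℕ) (hM : M.Infinite) :
    ∃ H, H ⊆ M ∧ H.Infinite ∧
      ((∀ N, N ⊆ H → N.Infinite → Hits Fam N) ∨ (∀ N, N ⊆ H → N.Infinite → ¬ Hits Fam N)) := by
  obtain ⟨N, hNM, hNi, hd⟩ := decide_aux Fam ∅ M hM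
  rcases hd with hacc | hrej
  · refine ⟨N, hNM, hNi, Or.inl (fun R hR hRi => ?_)⟩
    have := hacc R hR hRi
    simpa using this
  · obtain ⟨H, hHN, hHi, hnot⟩ := fusion Fam N hNi hrej
    refine ⟨H, hHN.trans hNM, hHi, Or.inr (fun R hR hRi hhits => ?_)⟩
    obtain ⟨s, hsF, hs1, _⟩ := hhits
    exact hnot s (hs1.trans hR) hsF

/-- helper: alternating selection from two infinite sets -/
theorem exists_alt_seq (P Q : Set ℕ) (hP : P.Infinite) (hQ : Q.Infinite) :
    ∃ f : ℕ → ℕ, StrictMono f ∧ ∀ i, f i ∈ (if Even i then P else Q) := by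
  classical
  have key : ∀ (R : Set ℕ), R.Infinite → ∀ m : ℕ, sInf (R ∩ Set.Ioi m) ∈ R ∩ Set.Ioi m := by
    intro R hR m
    have hsub : R \ Set.Iic m ⊆ R ∩ Set.Ioi m := by
      rintro x ⟨hx1, hx2⟩
      simp only [Set.mem_Iic, not_le] at hx2
      exact ⟨hx1, hx2⟩
    exact Nat.sInf_mem ((hR.diff (Set.finite_Iic m)).mono hsub).nonempty
  set g : ℕ → Set ℕ := fun i => if Even i then P else Q with hg
  have hginf : ∀ i, (g i).Infinite := by
    intro i; by_cases h : Even i <;> simp [hg, h, hP, hQ]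
  set f : ℕ → ℕ := fun i => Nat.rec (sInf (g 0 ∩ Set.Ioi 0)) (fun i prev => sInf (g (i+1) ∩ Set.Ioi prev)) i with hf
  have hfs : ∀ i, f (i+1) ∈ g (i+1) ∩ Set.Ioi (f i) := fun i => key _ (hginf (i+1)) (f i)
  have hf0 : f 0 ∈ g 0 ∩ Set.Ioi 0 := key _ (hginf 0) 0
  refine ⟨f, strictMono_nat_of_lt_succ (fun i => (hfs i).2), ?_⟩
  intro i
  cases i with
  | zero => exact hf0.1
  | succ i => exact (hfs i).1

theorem solveD (W : Finset ℕ) (ε : ℕ → Bool) : ∃ D, D ⊆ W ∧ ∀ k ∈ W,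
    ((W.filter (· < k)).card + (D.filter (· ≤ k)).card) % 2 = (if ε k then 1 else 0) := by
  classical
  induction W using Finset.induction_on_max with
  | empty => exact ⟨∅, by simp⟩
  | insert a W ha ih =>
    obtain ⟨D', hD'W, hD'⟩ := ih
    have haW : a ∉ W := fun h => lt_irrefl a (ha a h)
    have hfilt : ∀ k ∈ W, (insert a W).filter (· < k) = W.filter (· < k) := by
      intro k hk
      rw [Finset.filter_insert, if_neg (by have := ha k hk; omega)]
    set c := ((insert a W).filter (· < a)).card + (D'.filter (· ≤ a)).card with hc
    by_cases hpar : c % 2 = (if ε a then 1 else 0)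
    · refine ⟨D', hD'W.trans (Finset.subset_insert a W), ?_⟩
      intro k hk
      rcases Finset.mem_insert.1 hk with rfl | hk
      · exact hpar
      · rw [hfilt k hk]; exact hD' k hk
    · refine ⟨insert a D', Finset.insert_subset_insert a hD'W, ?_⟩
      intro k hk
      rcases Finset.mem_insert.1 hk with rfl | hk
      · have haD' : k ∉ D' := fun h => haW (hD'W h)
        have h1 : (insert k W).filter (· < k) = W.filter (· < k) := by
          rw [Finset.filter_insert, if_neg (lt_irrefl k)]
        have h2 : (insert k D').filter (· ≤ k) = insert k (D'.filter (· ≤ k)) := by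
          rw [Finset.filter_insert, if_pos (le_refl k)]
        rw [h1, h2, Finset.card_insert_of_notMem (fun h => haD' (Finset.mem_of_mem_filter k h))]
        rw [hc, h1] at hpar
        by_cases hε : ε k = true <;> simp [hε] at hpar ⊢ <;> omega
      · rw [hfilt k hk, Finset.filter_insert, if_neg (by have := ha k hk; omega)]
        exact hD' k hk

theorem dichotomy {S : Type*} (A B : ℕ → Set S) (hd : ∀ n, A n ∩ B n = ∅)
    (M : Set ℕ) (hM : M.Infinite) :
    (∃ φ : ℕ → ℕ, StrictMono φ ∧ (∀ k, φ k ∈ M) ∧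
        ∀ F G : Finset ℕ, Disjoint F G →
          ∃ x, (∀ k ∈ F, x ∈ A (φ k)) ∧ (∀ k ∈ G, x ∈ B (φ k))) ∨
    (∃ H, H ⊆ M ∧ H.Infinite ∧
        ∀ x, ¬ ({n | n ∈ H ∧ x ∈ A n}.Infinite ∧ {n | n ∈ H ∧ x ∈ B n}.Infinite)) := by
  classical
  set Fam : Set (Finset ℕ) :=
    {s | ¬ ∃ x, ∀ p ∈ s, if Even ((s.filter (· < p)).card) then x ∈ A p else x ∈ B p} with hFam
  obtain ⟨H, hHM, hHi, hcases⟩ := nashWilliams Fam M hM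
  rcases hcases with hall | hnone
  · -- convergence branch
    right
    refine ⟨H, hHM, hHi, ?_⟩
    rintro x ⟨hPi, hQi⟩
    set P := {n | n ∈ H ∧ x ∈ A n} with hP
    set Q := {n | n ∈ H ∧ x ∈ B n} with hQ
    obtain ⟨f, hfsm, hfmem⟩ := exists_alt_seq P Q hPi hQi
    set N := Set.range f with hN
    have hNH : N ⊆ H := by
      rintro _ ⟨i, rfl⟩
      have := hfmem i
      by_cases h : Even i <;> simp [h] at this
      · exact this.1
      · exact this.1
    obtain ⟨s, hsF, hseg⟩ := hall N hNH (Set.infinite_range_of_injective hfsm.injective)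
    apply hsF
    refine ⟨x, ?_⟩
    intro p hp
    obtain ⟨i, rfl⟩ := hseg.1 hp
    -- downward closure of indices
    have hdc : ∀ j i : ℕ, j ≤ i → f i ∈ s → f j ∈ s := by
      intro j i hji hfi
      by_contra hfj
      have := hseg.2 (f j) ⟨j, rfl⟩ hfj (f i) hfi
      have := hfsm.le_iff_le.2 hji
      omega
    have hrank : s.filter (· < f i) = (Finset.range i).image f := by
      ext m
      simp only [Finset.mem_filter, Finset.mem_image, Finset.mem_range]
      constructor
      · rintro ⟨hms, hmlt⟩
        obtain ⟨j, rfl⟩ := hseg.1 hms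
        exact ⟨j, hfsm.lt_iff_lt.1 hmlt, rfl⟩
      · rintro ⟨j, hji, rfl⟩
        exact ⟨hdc j i (le_of_lt hji) hp, hfsm hji⟩
    have hcard : (s.filter (· < f i)).card = i := by
      rw [hrank, Finset.card_image_of_injective _ hfsm.injective, Finset.card_range]
    rw [hcard]
    have := hfmem i
    by_cases h : Even i <;> simp [h] at this ⊢
    · exact this.2
    · exact this.2
  · -- independence branch
    left
    obtain ⟨e, hesm, hemem⟩ := exists_alt_seq H H hHi hHi
    have heH : ∀ i, e i ∈ H := by
      intro i; have := hemem i; by_cases h : Even i <;> simpa [h] using this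
    refine ⟨fun k => e (2 * k + 1), fun a b hab => hesm (by omega), fun k => hHM (heH _), ?_⟩
    intro F G hFG
    set W := F ∪ G with hW
    obtain ⟨D, hDW, hDpar⟩ := solveD W (fun k => decide (k ∈ G))
    set t : Finset ℕ := W.image (fun k => 2 * k + 1) ∪ D.image (fun k => 2 * k) with ht
    have hrankt : ∀ k ∈ W, (t.filter (· < 2 * k + 1)).card =
        (W.filter (· < k)).card + (D.filter (· ≤ k)).card := by
      intro k hk
      have h1 : (W.image (fun j => 2 * j + 1)).filter (· < 2 * k + 1) =
          (W.filter (· < k)).image (fun j => 2 * j + 1) := by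
        ext m
        simp only [Finset.mem_filter, Finset.mem_image]
        constructor
        · rintro ⟨⟨j, hj, rfl⟩, hlt⟩; exact ⟨j, ⟨hj, by omega⟩, rfl⟩
        · rintro ⟨j, ⟨hj, hjk⟩, rfl⟩; exact ⟨⟨j, hj, rfl⟩, by omega⟩
      have h2 : (D.image (fun j => 2 * j)).filter (· < 2 * k + 1) =
          (D.filter (· ≤ k)).image (fun j => 2 * j) := by
        ext m
        simp only [Finset.mem_filter, Finset.mem_image]
        constructor
        · rintro ⟨⟨j, hj, rfl⟩, hlt⟩; exact ⟨j, ⟨hj, by omega⟩, rfl⟩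
        · rintro ⟨j, ⟨hj, hjk⟩, rfl⟩; exact ⟨⟨j, hj, rfl⟩, by omega⟩
      have hdisj : Disjoint ((W.image (fun j => 2 * j + 1)).filter (· < 2 * k + 1))
          ((D.image (fun j => 2 * j)).filter (· < 2 * k + 1)) := by
        rw [Finset.disjoint_left]
        intro m hm1 hm2
        obtain ⟨j1, _, hj1⟩ := Finset.mem_image.1 (Finset.mem_of_mem_filter m hm1)
        obtain ⟨j2, _, hj2⟩ := Finset.mem_image.1 (Finset.mem_of_mem_filter m hm2)
        omega
      have hinj1 : Function.Injective (fun j : ℕ => 2 * j + 1) := by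
        intro a b hab
        have h : 2 * a + 1 = 2 * b + 1 := hab
        omega
      have hinj2 : Function.Injective (fun j : ℕ => 2 * j) := by
        intro a b hab
        have h : 2 * a = 2 * b := hab
        omega
      rw [ht, Finset.filter_union, Finset.card_union_of_disjoint hdisj, h1, h2,
        Finset.card_image_of_injective _ hinj1, Finset.card_image_of_injective _ hinj2]
    set s₀ : Finset ℕ := t.image e with hs₀
    have hs₀Fam : s₀ ∉ Fam := by
      intro hsF
      set T : Set ℕ := e '' {p | t.sup id < p} with hT
      have hTi : T.Infinite := (Set.Ioi_infinite (t.sup id)).image hesm.injective.injOn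
      have hNi : (↑s₀ ∪ T).Infinite := hTi.mono Set.subset_union_right
      have hNH : (↑s₀ ∪ T) ⊆ H := by
        rintro n (hn | hn)
        · obtain ⟨q, _, rfl⟩ := Finset.mem_image.1 (Finset.mem_coe.1 hn)
          exact heH q
        · obtain ⟨p, _, rfl⟩ := hn
          exact heH p
      refine hnone (↑s₀ ∪ T) hNH hNi ⟨s₀, hsF, Set.subset_union_left, ?_⟩
      rintro n (hn | hn) hns
      · exact absurd (Finset.mem_coe.1 hn) hns
      · obtain ⟨p, hp, rfl⟩ := hn
        intro m hm
        obtain ⟨q, hq, rfl⟩ := Finset.mem_image.1 hm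
        exact hesm (lt_of_le_of_lt (Finset.le_sup (f := id) hq) hp)
    have hex : ∃ x, ∀ p ∈ s₀,
        if Even ((s₀.filter (· < p)).card) then x ∈ A p else x ∈ B p := not_not.1 hs₀Fam
    obtain ⟨x, hx⟩ := hex
    have htrans : ∀ q ∈ t, (s₀.filter (· < e q)).card = (t.filter (· < q)).card := by
      intro q hq
      have heq : s₀.filter (· < e q) = (t.filter (· < q)).image e := by
        ext m
        simp only [Finset.mem_filter, Finset.mem_image, hs₀]
        constructor
        · rintro ⟨⟨j, hj, rfl⟩, hlt⟩
          exact ⟨j, ⟨hj, hesm.lt_iff_lt.1 hlt⟩, rfl⟩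
        · rintro ⟨j, ⟨hj, hjq⟩, rfl⟩
          exact ⟨⟨j, hj, rfl⟩, hesm hjq⟩
      rw [heq, Finset.card_image_of_injective _ hesm.injective]
    refine ⟨x, ?_, ?_⟩
    · intro k hkF
      have hkW : k ∈ W := Finset.mem_union_left _ hkF
      have hq : (2 * k + 1) ∈ t := Finset.mem_union_left _ (Finset.mem_image_of_mem _ hkW)
      have hps : e (2 * k + 1) ∈ s₀ := Finset.mem_image_of_mem e hq
      have hval := hx (e (2 * k + 1)) hps
      rw [htrans _ hq, hrankt k hkW] at hval
      have hkG : k ∉ G := Finset.disjoint_left.1 hFG hkF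
      have hpar := hDpar k hkW
      simp only [hkG, decide_eq_true_eq, if_neg, decide_false] at hpar
      have hev : Even ((W.filter (· < k)).card + (D.filter (· ≤ k)).card) := by
        rw [Nat.even_iff]
        simpa using hpar
      rwa [if_pos hev] at hval
    · intro k hkG
      have hkW : k ∈ W := Finset.mem_union_right _ hkG
      have hq : (2 * k + 1) ∈ t := Finset.mem_union_left _ (Finset.mem_image_of_mem _ hkW)
      have hps : e (2 * k + 1) ∈ s₀ := Finset.mem_image_of_mem e hq
      have hval := hx (e (2 * k + 1)) hps
      rw [htrans _ hq, hrankt k hkW] at hval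
      have hpar := hDpar k hkW
      simp only [hkG, decide_true] at hpar
      have hev : ¬ Even ((W.filter (· < k)).card + (D.filter (· ≤ k)).card) := by
        rw [Nat.even_iff]
        simpa using hpar
      rwa [if_neg hev] at hval
end NWx

namespace Rosenthal


variable {X : Type*} [NormedAddCommGroup X] [NormedSpace ℝ X]

theorem hasSum_abs (a : ellOne) : HasSum (fun k => |(a : ∀ _ : ℕ, ℝ) k|) ‖a‖ := by
  have h := lp.hasSum_norm (p := 1) (by rw [ENNReal.toReal_one]; exact one_pos) a
  simp only [ENNReal.toReal_one, Real.rpow_one, Real.norm_eq_abs] at h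
  exact h

theorem norm_term_le (g : ℕ → (X →L[ℝ] ℝ)) (hg : ∀ k, ‖g k‖ ≤ 1) (a : ellOne) (k : ℕ) :
    ‖(a : ∀ _ : ℕ, ℝ) k • g k‖ ≤ |(a : ∀ _ : ℕ, ℝ) k| := by
  calc ‖(a : ∀ _ : ℕ, ℝ) k • g k‖ ≤ ‖(a : ∀ _ : ℕ, ℝ) k‖ * ‖g k‖ :=
        ContinuousLinearMap.opNorm_smul_le _ _
    _ ≤ ‖(a : ∀ _ : ℕ, ℝ) k‖ * 1 := mul_le_mul_of_nonneg_left (hg k) (norm_nonneg _)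
    _ = |(a : ∀ _ : ℕ, ℝ) k| := by simp [Real.norm_eq_abs]

theorem summable_smul (g : ℕ → (X →L[ℝ] ℝ)) (hg : ∀ k, ‖g k‖ ≤ 1) (a : ellOne) :
    Summable (fun k => (a : ∀ _ : ℕ, ℝ) k • g k) :=
  Summable.of_norm_bounded (hasSum_abs a).summable
    (norm_term_le g hg a)

theorem ellOne_embed (g : ℕ → (X →L[ℝ] ℝ)) (hg : ∀ k, ‖g k‖ ≤ 1) (δ : ℝ) (hδ : 0 < δ)
    (hlow : ∀ (a : ℕ → ℝ) (n : ℕ), δ * ∑ k ∈ Finset.range n, |a k| ≤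
      ‖∑ k ∈ Finset.range n, a k • g k‖) :
    ∃ M : Submodule ℝ (X →L[ℝ] ℝ), IsClosed (M : Set (X →L[ℝ] ℝ)) ∧
      IsomorphicBanach ↥M ellOne := by
  classical
  let Tl : ellOne →ₗ[ℝ] (X →L[ℝ] ℝ) :=
    { toFun := fun a => ∑' k, (a : ∀ _ : ℕ, ℝ) k • g k
      map_add' := by
        intro a b
        have hfun : (fun k => ((a + b : ellOne) : ∀ _ : ℕ, ℝ) k • g k)
            = fun k => (a : ∀ _ : ℕ, ℝ) k • g k + (b : ∀ _ : ℕ, ℝ) k • g k := by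
          funext k
          have h1 : ((a + b : ellOne) : ∀ _ : ℕ, ℝ) k
              = (a : ∀ _ : ℕ, ℝ) k + (b : ∀ _ : ℕ, ℝ) k := by
            rw [lp.coeFn_add]; rfl
          rw [h1, add_smul]
        show (∑' k, ((a + b : ellOne) : ∀ _ : ℕ, ℝ) k • g k) = _
        rw [hfun, Summable.tsum_add (summable_smul g hg a) (summable_smul g hg b)]
      map_smul' := by
        intro c a
        have hfun : (fun k => ((c • a : ellOne) : ∀ _ : ℕ, ℝ) k • g k)
            = fun k => c • ((a : ∀ _ : ℕ, ℝ) k • g k) := by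
          funext k
          have h1 : ((c • a : ellOne) : ∀ _ : ℕ, ℝ) k = c * (a : ∀ _ : ℕ, ℝ) k := by
            rw [lp.coeFn_smul]; rfl
          rw [h1, smul_smul]
        show (∑' k, ((c • a : ellOne) : ∀ _ : ℕ, ℝ) k • g k) = _
        rw [hfun, Summable.tsum_const_smul c (summable_smul g hg a)]
        rfl }
  have hnsum : ∀ a : ellOne, Summable (fun k => ‖(a : ∀ _ : ℕ, ℝ) k • g k‖) := fun a =>
    Summable.of_nonneg_of_le (fun k => norm_nonneg _) (norm_term_le g hg a)
      (hasSum_abs a).summable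
  have hTbound : ∀ a : ellOne, ‖Tl a‖ ≤ 1 * ‖a‖ := by
    intro a
    rw [one_mul]
    calc ‖∑' k, (a : ∀ _ : ℕ, ℝ) k • g k‖ ≤ ∑' k, ‖(a : ∀ _ : ℕ, ℝ) k • g k‖ :=
          norm_tsum_le_tsum_norm (hnsum a)
      _ ≤ ∑' k, |(a : ∀ _ : ℕ, ℝ) k| :=
          Summable.tsum_le_tsum (norm_term_le g hg a) (hnsum a) (hasSum_abs a).summable
      _ = ‖a‖ := (hasSum_abs a).tsum_eq
  let T : ellOne →L[ℝ] (X →L[ℝ] ℝ) := Tl.mkContinuous 1 hTbound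
  have hTa : ∀ a : ellOne, T a = ∑' k, (a : ∀ _ : ℕ, ℝ) k • g k := fun a => rfl
  have hTlow : ∀ a : ellOne, δ * ‖a‖ ≤ ‖T a‖ := by
    intro a
    have hsum := summable_smul g hg a
    have h1 : Tendsto (fun n => ‖∑ k ∈ Finset.range n, (a : ∀ _ : ℕ, ℝ) k • g k‖)
        atTop (nhds ‖T a‖) := by
      rw [hTa]
      exact (hsum.hasSum.tendsto_sum_nat).norm
    have h2 : Tendsto (fun n => δ * ∑ k ∈ Finset.range n, |(a : ∀ _ : ℕ, ℝ) k|)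
        atTop (nhds (δ * ‖a‖)) := by
      exact ((hasSum_abs a).tendsto_sum_nat).const_mul δ
    exact le_of_tendsto_of_tendsto' h2 h1 (fun n => hlow _ n)
  have hanti : AntilipschitzWith (Real.toNNReal δ⁻¹) T := by
    apply ContinuousLinearMap.antilipschitz_of_bound
    intro a
    rw [Real.coe_toNNReal _ (by positivity)]
    rw [inv_mul_eq_div, le_div_iff₀ hδ, mul_comm]
    exact hTlow a
  have hinj : Function.Injective T := hanti.injective
  have hclosed : IsClosed (Set.range T) := hanti.isClosed_range T.uniformContinuous
  refine ⟨LinearMap.range (T : ellOne →ₗ[ℝ] (X →L[ℝ] ℝ)), ?_, ?_⟩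
  · have : (LinearMap.range (T : ellOne →ₗ[ℝ] (X →L[ℝ] ℝ)) : Set (X →L[ℝ] ℝ)) =
        Set.range T := by
      ext y
      constructor
      · rintro ⟨a, rfl⟩; exact ⟨a, rfl⟩
      · rintro ⟨a, rfl⟩; exact ⟨a, rfl⟩
    rw [this]; exact hclosed
  · let e : ellOne ≃ₗ[ℝ] ↥(LinearMap.range (T : ellOne →ₗ[ℝ] (X →L[ℝ] ℝ))) :=
      LinearEquiv.ofInjective (T : ellOne →ₗ[ℝ] (X →L[ℝ] ℝ)) hinj
    have hecoe : ∀ a : ellOne, ((e a : ↥(LinearMap.range (T : ellOne →ₗ[ℝ] (X →L[ℝ] ℝ)))) :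
        (X →L[ℝ] ℝ)) = T a := fun a => rfl
    have h_to : ∀ a : ellOne, ‖e a‖ ≤ 1 * ‖a‖ := by
      intro a
      have h0 : ‖e a‖ = ‖T a‖ := by rw [← hecoe a]; rfl
      rw [h0]
      exact hTbound a
    have h_inv : ∀ m, ‖e.symm m‖ ≤ δ⁻¹ * ‖m‖ := by
      intro m
      have h1 : T (e.symm m) = (m : X →L[ℝ] ℝ) := by
        conv_rhs => rw [← e.apply_symm_apply m]
        exact (hecoe (e.symm m)).symm
      have h2 := hTlow (e.symm m)
      rw [h1] at h2
      rw [inv_mul_eq_div, le_div_iff₀ hδ]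
      exact (by rw [mul_comm]; exact h2 : ‖e.symm m‖ * δ ≤ ‖(m : X →L[ℝ] ℝ)‖)
    exact ⟨(e.toContinuousLinearEquivOfBounds 1 δ⁻¹ h_to h_inv).symm⟩

theorem indep_lower_bound (f : ℕ → (X →L[ℝ] ℝ)) (r s : ℝ)
    (hind : ∀ F G : Finset ℕ, Disjoint F G → ∃ x : X, ‖x‖ ≤ 1 ∧
      (∀ k ∈ F, f k x < r) ∧ (∀ k ∈ G, s < f k x)) :
    ∀ (a : ℕ → ℝ) (n : ℕ), (s - r) / 2 * ∑ k ∈ Finset.range n, |a k| ≤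
      ‖∑ k ∈ Finset.range n, a k • f k‖ := by
  classical
  intro a n
  set g : X →L[ℝ] ℝ := ∑ k ∈ Finset.range n, a k • f k with hg
  set Fp := (Finset.range n).filter (fun k => 0 ≤ a k) with hFp
  set Fm := (Finset.range n).filter (fun k => ¬ 0 ≤ a k) with hFm
  have hdisj : Disjoint Fm Fp := by
    rw [Finset.disjoint_left]
    intro k hk1 hk2
    exact (Finset.mem_filter.1 hk1).2 (Finset.mem_filter.1 hk2).2
  obtain ⟨x, hx1, hxA, hxB⟩ := hind Fm Fp hdisj
  obtain ⟨y, hy1, hyA, hyB⟩ := hind Fp Fm hdisj.symm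
  have hgapp : ∀ z : X, g z = ∑ k ∈ Finset.range n, a k * f k z := by
    intro z
    rw [hg]
    simp [ContinuousLinearMap.sum_apply, ContinuousLinearMap.smul_apply, smul_eq_mul]
  have hkey : (s - r) * ∑ k ∈ Finset.range n, |a k| ≤ g x - g y := by
    rw [hgapp x, hgapp y, ← Finset.sum_sub_distrib, Finset.mul_sum]
    apply Finset.sum_le_sum
    intro k hk
    by_cases hak : 0 ≤ a k
    · have h1 : s < f k x := hxB k (Finset.mem_filter.2 ⟨hk, hak⟩)
      have h2 : f k y < r := hyA k (Finset.mem_filter.2 ⟨hk, hak⟩)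
      have h3 : |a k| = a k := abs_of_nonneg hak
      have h4 := mul_le_mul_of_nonneg_left (show s - r ≤ f k x - f k y by linarith) hak
      rw [h3]; nlinarith
    · have h1 : f k x < r := hxA k (Finset.mem_filter.2 ⟨hk, hak⟩)
      have h2 : s < f k y := hyB k (Finset.mem_filter.2 ⟨hk, hak⟩)
      have h3 : |a k| = -a k := abs_of_neg (not_le.1 hak)
      have h4 := mul_le_mul_of_nonpos_left (show f k x - f k y ≤ r - s by linarith)
        (le_of_lt (not_le.1 hak))
      rw [h3]; nlinarith
  have hgx : |g x| ≤ ‖g‖ := by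
    calc |g x| ≤ ‖g‖ * ‖x‖ := g.le_opNorm x
      _ ≤ ‖g‖ * 1 := mul_le_mul_of_nonneg_left hx1 (norm_nonneg g)
      _ = ‖g‖ := mul_one _
  have hgy : |g y| ≤ ‖g‖ := by
    calc |g y| ≤ ‖g‖ * ‖y‖ := g.le_opNorm y
      _ ≤ ‖g‖ * 1 := mul_le_mul_of_nonneg_left hy1 (norm_nonneg g)
      _ = ‖g‖ := mul_one _
  have habs : ∀ z : ℝ, z ≤ |z| := fun z => le_abs_self z
  have h4 : g x - g y ≤ 2 * ‖g‖ := by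
    have := habs (g x)
    have := habs (-(g y))
    have : -(g y) ≤ |g y| := by rw [← abs_neg]; exact le_abs_self _
    linarith [le_abs_self (g x)]
  have hS : (0:ℝ) ≤ ∑ k ∈ Finset.range n, |a k| :=
    Finset.sum_nonneg (fun k _ => abs_nonneg _)
  linarith
end Rosenthal

/-- If `X*` contains no closed subspace isomorphic to `ℓ¹`, then `X` has
weak*-sequentially compact dual ball. -/
theorem wstar_seq_compact_dual_ball_of_no_ellOne_in_dual
    (X : Type*) [NormedAddCommGroup X] [NormedSpace ℝ X] [CompleteSpace X]
    (h : ¬ ∃ M : Submodule ℝ (X →L[ℝ] ℝ),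
        IsClosed (M : Set (X →L[ℝ] ℝ)) ∧ IsomorphicBanach ↥M ellOne) :
    WStarSeqCompactDualBall X := by
  classical
  intro f hf
  set A : ℚ → ℕ → Set X := fun r i => {x | ‖x‖ ≤ 1 ∧ f i x < (r : ℝ)} with hA
  set B : ℚ → ℕ → Set X := fun s i => {x | ‖x‖ ≤ 1 ∧ (s : ℝ) < f i x} with hB
  have key : ∀ (r s : ℚ), r < s → ∀ M : Set ℕ, M.Infinite →
      ∃ H, H ⊆ M ∧ H.Infinite ∧ ∀ x : X,
        ¬ ({i | i ∈ H ∧ x ∈ A r i}.Infinite ∧ {i | i ∈ H ∧ x ∈ B s i}.Infinite) := by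
    intro r s hrs M hM
    have hrsR : (r : ℝ) < s := by exact_mod_cast hrs
    have hd : ∀ i, A r i ∩ B s i = ∅ := by
      intro i
      ext x
      simp only [Set.mem_inter_iff, Set.mem_empty_iff_false, iff_false, not_and]
      rintro ⟨_, h1⟩ ⟨_, h2⟩
      linarith
    rcases NWx.dichotomy (A r) (B s) hd M hM with ⟨φ, hφsm, hφM, hind⟩ | ⟨H, hHM, hHi, hconv⟩
    · exfalso
      apply h
      have hδ : (0 : ℝ) < ((s : ℝ) - r) / 2 := by linarith
      apply Rosenthal.ellOne_embed (fun k => f (φ k)) (fun k => hf (φ k)) _ hδ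
      apply Rosenthal.indep_lower_bound (fun k => f (φ k)) r s
      intro F G hFG
      obtain ⟨x, hxF, hxG⟩ := hind F G hFG
      rcases F.eq_empty_or_nonempty with rfl | ⟨k0, hk0⟩
      · rcases G.eq_empty_or_nonempty with rfl | ⟨k0, hk0⟩
        · exact ⟨0, by simp, by simp, by simp⟩
        · exact ⟨x, (hxG k0 hk0).1, fun k hk => (hxF k hk).2, fun k hk => (hxG k hk).2⟩
      · exact ⟨x, (hxF k0 hk0).1, fun k hk => (hxF k hk).2, fun k hk => (hxG k hk).2⟩
    · exact ⟨H, hHM, hHi, hconv⟩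
  have hne : Nonempty {p : ℚ × ℚ // p.1 < p.2} := ⟨⟨(0, 1), by norm_num⟩⟩
  obtain ⟨u, hu⟩ := exists_surjective_nat {p : ℚ × ℚ // p.1 < p.2}
  have step : ∀ (m : ℕ) (M : Set ℕ), M.Infinite → ∃ H, H ⊆ M ∧ H.Infinite ∧ ∀ x : X,
      ¬ ({i | i ∈ H ∧ x ∈ A (u m).1.1 i}.Infinite ∧
         {i | i ∈ H ∧ x ∈ B (u m).1.2 i}.Infinite) :=
    fun m M hM => key (u m).1.1 (u m).1.2 (u m).2 M hM
  choose St h1 h2 h3 using step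
  set Ms : ℕ → {q : Set ℕ // q.Infinite} :=
    fun m => Nat.rec ⟨Set.univ, Set.infinite_univ⟩
      (fun m p => ⟨St m p.1 p.2, h2 m p.1 p.2⟩) m with hMs
  have hMssub : ∀ m, (Ms (m + 1)).1 ⊆ (Ms m).1 := fun m => h1 m _ _
  have hMsconv : ∀ m, ∀ x : X,
      ¬ ({i | i ∈ (Ms (m + 1)).1 ∧ x ∈ A (u m).1.1 i}.Infinite ∧
         {i | i ∈ (Ms (m + 1)).1 ∧ x ∈ B (u m).1.2 i}.Infinite) := fun m => h3 m _ _
  have hMsmono : ∀ m l, m ≤ l → (Ms l).1 ⊆ (Ms m).1 := by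
    intro m l hml
    induction l, hml using Nat.le_induction with
    | base => exact subset_rfl
    | succ l hml ih => exact (hMssub l).trans ih
  have hstep2 : ∀ (m c : ℕ), sInf ((Ms (m + 1)).1 ∩ Set.Ioi c) ∈ (Ms (m + 1)).1 ∩ Set.Ioi c := by
    intro m c
    have hsub : (Ms (m + 1)).1 \ Set.Iic c ⊆ (Ms (m + 1)).1 ∩ Set.Ioi c := by
      rintro i ⟨hi1, hi2⟩
      simp only [Set.mem_Iic, not_le] at hi2
      exact ⟨hi1, hi2⟩
    exact Nat.sInf_mem (((Ms (m + 1)).2.diff (Set.finite_Iic c)).mono hsub).nonempty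
  set nn : ℕ → ℕ := fun m => Nat.rec (sInf ((Ms 1).1 ∩ Set.Ioi 0))
    (fun m prev => sInf ((Ms (m + 2)).1 ∩ Set.Ioi prev)) m with hnn
  have hnmem : ∀ m, nn m ∈ (Ms (m + 1)).1 := by
    intro m
    cases m with
    | zero => exact (hstep2 0 0).1
    | succ m => exact (hstep2 (m + 1) (nn m)).1
  have hnsm : StrictMono nn := strictMono_nat_of_lt_succ (fun m => (hstep2 (m + 1) (nn m)).2)
  have htail : ∀ m j, m ≤ j → nn j ∈ (Ms (m + 1)).1 :=
    fun m j hmj => hMsmono (m + 1) (j + 1) (by omega) (hnmem j)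
  have hball : ∀ x : X, ‖x‖ ≤ 1 → ∃ L, Tendsto (fun k => f (nn k) x) atTop (nhds L) := by
    intro x hx
    set v : ℕ → ℝ := fun k => f (nn k) x with hv
    have hvbd : ∀ k, |v k| ≤ 1 := by
      intro k
      calc |v k| ≤ ‖f (nn k)‖ * ‖x‖ := (f (nn k)).le_opNorm x
        _ ≤ 1 * 1 := mul_le_mul (hf _) hx (norm_nonneg x) zero_le_one
        _ = 1 := one_mul 1
    have hbdd1 : IsBoundedUnder (· ≤ ·) atTop v :=
      isBoundedUnder_of ⟨1, fun k => (abs_le.1 (hvbd k)).2⟩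
    have hbdd2 : IsBoundedUnder (· ≥ ·) atTop v :=
      isBoundedUnder_of ⟨-1, fun k => (abs_le.1 (hvbd k)).1⟩
    have heq : liminf v atTop = limsup v atTop := by
      by_contra hne2
      have hlt : liminf v atTop < limsup v atTop :=
        lt_of_le_of_ne (liminf_le_limsup hbdd1 hbdd2) hne2
      obtain ⟨r, hr1, hr2⟩ := exists_rat_btwn hlt
      obtain ⟨s, hs1, hs2⟩ := exists_rat_btwn hr2
      have hrs : r < s := by exact_mod_cast hs1
      obtain ⟨m, hm⟩ := hu ⟨(r, s), hrs⟩
      have hfr : ∃ᶠ k in atTop, v k < (r : ℝ) :=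
        frequently_lt_of_liminf_lt hbdd1.isCoboundedUnder_ge hr1
      have hfs : ∃ᶠ k in atTop, (s : ℝ) < v k :=
        frequently_lt_of_lt_limsup hbdd2.isCoboundedUnder_le hs2
      have hSa : {k | v k < (r : ℝ)}.Infinite := Nat.frequently_atTop_iff_infinite.1 hfr
      have hSb : {k | (s : ℝ) < v k}.Infinite := Nat.frequently_atTop_iff_infinite.1 hfs
      apply hMsconv m x
      constructor
      · have hsub : nn '' ({k | v k < (r : ℝ)} ∩ Set.Ici m) ⊆
            {i | i ∈ (Ms (m + 1)).1 ∧ x ∈ A (u m).1.1 i} := by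
          rintro _ ⟨k, ⟨hk1, hk2⟩, rfl⟩
          refine ⟨htail m k hk2, hx, ?_⟩
          rw [hm]
          exact hk1
        have hinf : ({k | v k < (r : ℝ)} ∩ Set.Ici m).Infinite := by
          apply Set.Infinite.mono _ (hSa.diff (Set.finite_Iio m))
          rintro k ⟨hk1, hk2⟩
          simp only [Set.mem_Iio, not_lt] at hk2
          exact ⟨hk1, hk2⟩
        exact ((hinf.image hnsm.injective.injOn).mono hsub)
      · have hsub : nn '' ({k | (s : ℝ) < v k} ∩ Set.Ici m) ⊆
            {i | i ∈ (Ms (m + 1)).1 ∧ x ∈ B (u m).1.2 i} := by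
          rintro _ ⟨k, ⟨hk1, hk2⟩, rfl⟩
          refine ⟨htail m k hk2, hx, ?_⟩
          rw [hm]
          exact hk1
        have hinf : ({k | (s : ℝ) < v k} ∩ Set.Ici m).Infinite := by
          apply Set.Infinite.mono _ (hSb.diff (Set.finite_Iio m))
          rintro k ⟨hk1, hk2⟩
          simp only [Set.mem_Iio, not_lt] at hk2
          exact ⟨hk1, hk2⟩
        exact ((hinf.image hnsm.injective.injOn).mono hsub)
    exact ⟨limsup v atTop, tendsto_of_liminf_eq_limsup heq rfl hbdd1 hbdd2⟩
  have hconvall : ∀ x : X, ∃ L, Tendsto (fun k => f (nn k) x) atTop (nhds L) := by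
    intro x
    by_cases hx0 : x = 0
    · subst hx0
      refine ⟨0, ?_⟩
      have : (fun k => f (nn k) (0 : X)) = fun _ => (0 : ℝ) := by
        funext k; rw [map_zero]
      rw [this]
      exact tendsto_const_nhds
    · have hxn : ‖x‖ ≠ 0 := norm_ne_zero_iff.2 hx0
      obtain ⟨L, hL⟩ := hball (‖x‖⁻¹ • x) (by
        rw [norm_smul, norm_inv, norm_norm, inv_mul_cancel₀ hxn])
      refine ⟨‖x‖ * L, ?_⟩
      have hxx : (fun k => f (nn k) x) = fun k => ‖x‖ * f (nn k) (‖x‖⁻¹ • x) := by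
        funext k
        rw [_root_.map_smul, smul_eq_mul, ← mul_assoc, mul_inv_cancel₀ hxn, one_mul]
      rw [hxx]
      exact hL.const_mul ‖x‖
  choose L hL using hconvall
  have hLadd : ∀ x y : X, L (x + y) = L x + L y := by
    intro x y
    refine tendsto_nhds_unique (hL (x + y)) ?_
    have h' := (hL x).add (hL y)
    have : (fun k => f (nn k) (x + y)) = fun k => f (nn k) x + f (nn k) y := by
      funext k; rw [map_add]
    rw [this]
    exact h'
  have hLsmul : ∀ (c : ℝ) (x : X), L (c • x) = c * L x := by
    intro c x
    refine tendsto_nhds_unique (hL (c • x)) ?_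
    have h' := (hL x).const_mul c
    have : (fun k => f (nn k) (c • x)) = fun k => c * f (nn k) x := by
      funext k; rw [_root_.map_smul, smul_eq_mul]
    rw [this]
    exact h'
  have hLbd : ∀ x : X, |L x| ≤ ‖x‖ := by
    intro x
    apply le_of_tendsto (hL x).abs
    apply Eventually.of_forall
    intro k
    calc |f (nn k) x| ≤ ‖f (nn k)‖ * ‖x‖ := (f (nn k)).le_opNorm x
      _ ≤ 1 * ‖x‖ := mul_le_mul_of_nonneg_right (hf _) (norm_nonneg x)
      _ = ‖x‖ := one_mul _
  set Lmap : X →ₗ[ℝ] ℝ :=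
    { toFun := L
      map_add' := hLadd
      map_smul' := fun c x => by rw [RingHom.id_apply, smul_eq_mul]; exact hLsmul c x } with hLmap
  set g : X →L[ℝ] ℝ := Lmap.mkContinuous 1 (fun x => by
    rw [one_mul]
    rw [Real.norm_eq_abs]; exact hLbd x) with hgdef
  exact ⟨nn, hnsm, g, fun x => hL x⟩
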